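/- In the affine Temperley–Lieb algebra aTL_{N+1}(m) with m = q + q^{-1}, the assignment u ↦ u g_N^{-1}, e_i ↦ e_i for 1 ≤ i ≤ N−1, e_0 ↦ g_N e_0 g_N^{-1} defines an algebra homomorphism from aTL_N(m): the images satisfy all defining relations of aTL_N, including (u g_N^{-1})² e_{N-1} = e_1 ⋯ e_{N-1}. -/

import Mathlib

/-- The defining relations of the affine Temperley–Lieb algebra `aTL_N(m)`:
`u` is invertible, `e_j² = m e_j`, `e_j e_{j±1} e_j = e_j`, distant `e`'s commute,
`u e_j u⁻¹ = e_{j+1}`, and `u² e_{N−1} = e_1 ⋯ e_{N−1}` (indices in `ℤ/Nℤ`,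
so `e_{N−1} = e (−1)`). -/
structure AffineTLRel (A : Type*) [Ring A] [Algebra ℂ A] (N : ℕ)
    (m : ℂ) (u uinv : A) (e : ZMod N → A) : Prop where
  mul_uinv : u * uinv = 1
  uinv_mul : uinv * u = 1
  esq : ∀ j, e j * e j = m • e j
  eje : ∀ j, e j * e (j + 1) * e j = e j
  eje' : ∀ j, e (j + 1) * e j * e (j + 1) = e (j + 1)
  ecomm : ∀ j l, j ≠ l → j ≠ l + 1 → l ≠ j + 1 → e j * e l = e l * e j
  uconj : ∀ j, u * e j * uinv = e (j + 1)
  utwist : u * u * e (-1) =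
    ((List.range (N - 1)).map (fun t => e ((t + 1 : ℕ) : ZMod N))).prod

set_option linter.unusedSectionVars false
set_option linter.unnecessarySeqFocus false
namespace ATLaux
variable {A : Type*} [Ring A] [Algebra ℂ A]

lemma conjg (s : ℂ) (hs0 : s ≠ 0) (f x : A) :
    (Complex.I • (s•(1:A) - s⁻¹•f)) * x * ((-Complex.I) • (s⁻¹•(1:A) - s•f))
      = x - (s*s)•(x*f) - (s⁻¹*s⁻¹)•(f*x) + f*x*f := by
  simp only [smul_mul_assoc, mul_smul_comm, sub_mul, mul_sub, one_mul, mul_one,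
    smul_sub, smul_smul, mul_assoc]
  match_scalars <;> ((try field_simp) <;> (try ring_nf) <;> (try (simp only [Complex.I_sq]; ring_nf)))
  all_goals exact Complex.I_sq

lemma conjginv (s : ℂ) (hs0 : s ≠ 0) (f x : A) :
    ((-Complex.I) • (s⁻¹•(1:A) - s•f)) * x * (Complex.I • (s•(1:A) - s⁻¹•f))
      = x - (s⁻¹*s⁻¹)•(x*f) - (s*s)•(f*x) + f*x*f := by
  simp only [smul_mul_assoc, mul_smul_comm, sub_mul, mul_sub, one_mul, mul_one,
    smul_sub, smul_smul, mul_assoc]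
  match_scalars <;> ((try field_simp) <;> (try ring_nf) <;> (try (simp only [Complex.I_sq]; ring_nf)))
  all_goals exact Complex.I_sq

lemma gginv (s : ℂ) (hs0 : s ≠ 0) (f : A) (hf : f*f = (s*s + (s*s)⁻¹)•f) :
    (Complex.I • (s•(1:A) - s⁻¹•f)) * ((-Complex.I) • (s⁻¹•(1:A) - s•f)) = 1 := by
  simp only [smul_mul_assoc, mul_smul_comm, sub_mul, mul_sub, one_mul, mul_one,
    smul_sub, smul_smul, hf]
  match_scalars <;> ((try field_simp) <;> (try ring_nf) <;> (try (simp only [Complex.I_sq]; ring_nf)))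

lemma ginvg (s : ℂ) (hs0 : s ≠ 0) (f : A) (hf : f*f = (s*s + (s*s)⁻¹)•f) :
    ((-Complex.I) • (s⁻¹•(1:A) - s•f)) * (Complex.I • (s•(1:A) - s⁻¹•f)) = 1 := by
  simp only [smul_mul_assoc, mul_smul_comm, sub_mul, mul_sub, one_mul, mul_one,
    smul_sub, smul_smul, hf]
  match_scalars <;> ((try field_simp) <;> (try ring_nf) <;> (try (simp only [Complex.I_sq]; ring_nf)))

lemma commg (c a b : ℂ) (f z : A) (h : z*f = f*z) :
    (c • (a•(1:A) - b•f)) * z = z * (c • (a•(1:A) - b•f)) := by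
  simp only [smul_mul_assoc, mul_smul_comm, sub_mul, mul_sub, one_mul, mul_one, smul_sub, h]

lemma key (α β : ℂ) (x y f : A) (hxx : x*x = (α+β)•x) (hxy : x*y = y*x)
    (hxfx : x*f*x = x) (hfyf : f*y*f = f) :
    x * (y - α•(y*f) - β•(f*y) + f*y*f) * x = x := by
  have k1 : x*(y*x) = (α+β)•(y*x) := by
    rw [← mul_assoc, hxy, mul_assoc, hxx, mul_smul_comm]
  have k2 : x*(y*(f*x)) = y*x := by
    rw [← mul_assoc, hxy, mul_assoc, ← mul_assoc x f x, hxfx]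
  have k3 : x*(f*(y*x)) = y*x := by
    rw [← mul_assoc, mul_assoc x f, ← hxy, ← mul_assoc, ← mul_assoc, hxfx, hxy]
  have k4 : x*(f*(y*(f*x))) = x := by
    rw [← mul_assoc y f x, ← mul_assoc f, ← mul_assoc f y f, hfyf, ← mul_assoc, hxfx]
  calc x * (y - α•(y*f) - β•(f*y) + f*y*f) * x
      = x*(y*x) - α•(x*(y*(f*x))) - β•(x*(f*(y*x))) + x*(f*(y*(f*x))) := by
        simp only [mul_sub, sub_mul, mul_add, add_mul, mul_smul_comm, smul_mul_assoc, mul_assoc]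
    _ = (α+β)•(y*x) - α•(y*x) - β•(y*x) + x := by rw [k1, k2, k3, k4]
    _ = x := by module

lemma sandwich (g gi x y : A) (h : gi * g = 1) : (g*x*gi)*(g*y*gi) = g*(x*y)*gi := by
  have h2 : (g*x*gi)*(g*y*gi) = g*(x*((gi*g)*y))*gi := by simp only [mul_assoc]
  rw [h2, h, one_mul]

lemma sandwich3 (g gi x y : A) (hgig : gi*g = 1) (hygi : gi*y = y*gi) :
    (g*x*gi)*y*(g*x*gi) = g*(x*y*x)*gi := by
  calc (g*x*gi)*y*(g*x*gi)
      = g*x*(gi*y)*(g*x*gi) := by simp only [mul_assoc]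
    _ = g*x*(y*gi)*(g*x*gi) := by rw [hygi]
    _ = g*(x*y)*((gi*g)*(x*gi)) := by simp only [mul_assoc]
    _ = g*(x*y*x)*gi := by rw [hgig, one_mul]; simp only [mul_assoc]

lemma sandwich4 (g gi x y : A) (hggi : g*gi = 1) (hyg : y*g = g*y) (hygi : gi*y = y*gi)
    (h : y*x*y = y) : y*(g*x*gi)*y = y := by
  calc y*(g*x*gi)*y = (y*g)*(x*(gi*y)) := by simp only [mul_assoc]
    _ = (g*y)*(x*(y*gi)) := by rw [hyg, hygi]
    _ = g*((y*x*y)*gi) := by simp only [mul_assoc]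
    _ = g*(y*gi) := by rw [h]
    _ = (y*g)*gi := by rw [← mul_assoc, ← hyg]
    _ = y := by rw [mul_assoc, hggi, mul_one]

lemma sandwich5 (g gi w x : A) : (g*w*gi)*x*(g*w*gi) = g*(w*(gi*x*g)*w)*gi := by
  simp only [mul_assoc]

lemma commG (g gi w z : A) (hzg : g*z = z*g) (hzgi : gi*z = z*gi) (hzw : w*z = z*w) :
    (g*w*gi)*z = z*(g*w*gi) := by
  calc (g*w*gi)*z = g*(w*(gi*z)) := by simp only [mul_assoc]
    _ = g*(w*(z*gi)) := by rw [hzgi]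
    _ = g*((w*z)*gi) := by rw [mul_assoc]
    _ = g*((z*w)*gi) := by rw [hzw]
    _ = (g*z)*(w*gi) := by simp only [mul_assoc]
    _ = (z*g)*(w*gi) := by rw [hzg]
    _ = z*(g*w*gi) := by simp only [mul_assoc]

lemma conj_sum (u uinv : A) (α β : ℂ) (x1 x2 x3 x4 : A) :
    u*(x1 - α•x2 - β•x3 + x4)*uinv
      = u*x1*uinv - α•(u*x2*uinv) - β•(u*x3*uinv) + u*x4*uinv := by
  simp only [mul_sub, sub_mul, mul_add, add_mul, mul_smul_comm, smul_mul_assoc]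

lemma final (s : ℂ) (hs0 : s ≠ 0) (z Q : A) (hz : z*z = (s*s + (s*s)⁻¹)•z) :
    ((-Complex.I)•(s⁻¹•(1:A) - s•z)) * ((-Complex.I)•(s⁻¹•(z*Q) - s•Q)) = Q := by
  have hzz : z*(z*Q) = (s*s + (s*s)⁻¹)•(z*Q) := by rw [← mul_assoc, hz, smul_mul_assoc]
  simp only [smul_mul_assoc, mul_smul_comm, sub_mul, mul_sub, one_mul, mul_one,
    smul_sub, smul_smul, hzz]
  match_scalars <;> ((try field_simp) <;> (try ring_nf) <;> (try (simp only [Complex.I_sq]; ring_nf)))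


lemma main (N : ℕ) (hN : 3 ≤ N)
    (q sq : ℂ) (hq : q ≠ 0) (hsq : sq * sq = q)
    (u uinv : A) (e : ZMod (N + 1) → A)
    (hrel : AffineTLRel A (N + 1) (q + q⁻¹) u uinv e)
    (f g gi : A) (hfd : f = e ((N : ℕ) : ZMod (N + 1)))
    (hgd : g = Complex.I • (sq • (1 : A) - sq⁻¹ • f))
    (hgid : gi = (-Complex.I) • (sq⁻¹ • (1 : A) - sq • f)) :
    AffineTLRel A N (q + q⁻¹) (u * gi) (g * uinv)
      (fun i => if i.val = 0 then g * e 0 * gi else e ((i.val : ℕ) : ZMod (N + 1))) := by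
  haveI : NeZero N := ⟨by omega⟩
  have hs0 : sq ≠ 0 := fun h => hq (by rw [← hsq, h, mul_zero])
  have hq' : sq⁻¹ * sq⁻¹ = q⁻¹ := by rw [← mul_inv, hsq]
  -- nat-indexed relations in aTL_{N+1}
  have hcast1 : ∀ a : ℕ, ((a : ZMod (N+1)) + 1) = ((a+1 : ℕ) : ZMod (N+1)) := by
    intro a; push_cast; ring
  have hadjN : ∀ a : ℕ, e a * e ((a+1:ℕ)) * e a = e a := by
    intro a; have h := hrel.eje (a : ZMod (N+1)); rwa [hcast1] at h
  have hadjN' : ∀ a : ℕ, e ((a+1:ℕ)) * e a * e ((a+1:ℕ)) = e ((a+1:ℕ)) := by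
    intro a; have h := hrel.eje' (a : ZMod (N+1)); rwa [hcast1] at h
  have huconjN : ∀ a : ℕ, u * e a * uinv = e ((a+1:ℕ)) := by
    intro a; have h := hrel.uconj (a : ZMod (N+1)); rwa [hcast1] at h
  have hshiftN : ∀ a : ℕ, u * e a = e ((a+1:ℕ)) * u := by
    intro a
    calc u * e a = (u * e a * uinv) * u := by rw [mul_assoc, hrel.uinv_mul, mul_one]
      _ = e ((a+1:ℕ)) * u := by rw [huconjN]
  have hcommN : ∀ a b : ℕ, a ≤ N → b ≤ N → a ≠ b → a ≠ b + 1 → b ≠ a + 1 →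
      (a ≠ 0 ∨ b ≠ N) → (b ≠ 0 ∨ a ≠ N) → e a * e b = e b * e a := by
    intro a b ha hb h1 h2 h3 h4 h5
    apply hrel.ecomm
    · intro h
      rw [ZMod.natCast_eq_natCast_iff', Nat.mod_eq_of_lt (by omega),
        Nat.mod_eq_of_lt (by omega)] at h
      omega
    · intro h
      rw [hcast1, ZMod.natCast_eq_natCast_iff', Nat.mod_eq_of_lt (by omega)] at h
      rcases Nat.lt_or_ge (b+1) (N+1) with hlt | hge
      · rw [Nat.mod_eq_of_lt hlt] at h; omega
      · have hbN : b = N := by omega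
        subst hbN
        rw [Nat.mod_self] at h
        rcases h4 with h4 | h4 <;> omega
    · intro h
      rw [hcast1, ZMod.natCast_eq_natCast_iff', Nat.mod_eq_of_lt (by omega)] at h
      rcases Nat.lt_or_ge (a+1) (N+1) with hlt | hge
      · rw [Nat.mod_eq_of_lt hlt] at h; omega
      · have haN : a = N := by omega
        subst haN
        rw [Nat.mod_self] at h
        rcases h5 with h5 | h5 <;> omega
  -- special facts about f = e N and e 0
  have hff' : f * f = (q + q⁻¹) • f := by rw [hfd]; exact hrel.esq _
  have hff : f * f = (sq*sq + (sq*sq)⁻¹) • f := by rw [hsq]; exact hff'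
  have hfe0f : f * e 0 * f = f := by
    rw [hfd]; have h := hadjN N; rwa [ZMod.natCast_self] at h
  have he0fe0 : e 0 * f * e 0 = e 0 := by
    rw [hfd]; have h := hadjN' N; rwa [ZMod.natCast_self] at h
  have hufu : u * f = e 0 * u := by
    rw [hfd]; have h := hshiftN N; rwa [ZMod.natCast_self] at h
  have hufuinv : u * f * uinv = e 0 := by
    rw [hfd]; have h := huconjN N; rwa [ZMod.natCast_self] at h
  have hggi : g * gi = 1 := by rw [hgd, hgid]; exact ATLaux.gginv sq hs0 f hff
  have hgig : gi * g = 1 := by rw [hgd, hgid]; exact ATLaux.ginvg sq hs0 f hff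
  have hcg : ∀ z : A, z * f = f * z → g * z = z * g := by
    intro z h; rw [hgd]; exact ATLaux.commg _ _ _ f z h
  have hcgi : ∀ z : A, z * f = f * z → gi * z = z * gi := by
    intro z h; rw [hgid]; exact ATLaux.commg _ _ _ f z h
  have hG : g * e 0 * gi = e 0 - q•(e 0*f) - q⁻¹•(f*e 0) + f*(e 0)*f := by
    rw [hgd, hgid]; have h := ATLaux.conjg sq hs0 f (e 0); rwa [hsq, hq'] at h
  have hGi : ∀ x : A, gi * x * g = x - q⁻¹•(x*f) - q•(f*x) + f*x*f := by
    intro x; rw [hgd, hgid]; have h := ATLaux.conjginv sq hs0 f x; rwa [hsq, hq'] at h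
  -- val arithmetic in ZMod N
  have hvlt : ∀ j : ZMod N, j.val < N := fun j => ZMod.val_lt j
  have hvcast : ∀ a : ℕ, a < N → ((a : ZMod N)).val = a := fun a ha => ZMod.val_cast_of_lt ha
  have hjcast : ∀ j : ZMod N, ((j.val : ℕ) : ZMod N) = j := fun j => ZMod.natCast_zmod_val j
  have hsucc : ∀ j : ZMod N, (j + 1) = ((j.val + 1 : ℕ) : ZMod N) := by
    intro j; conv_lhs => rw [← hjcast j]
    push_cast; ring
  have hsuccval : ∀ j : ZMod N, j.val + 1 < N → (j+1).val = j.val + 1 := by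
    intro j h; rw [hsucc j, hvcast _ h]
  have hsucc0 : ∀ j : ZMod N, j.val = N - 1 → j + 1 = 0 := by
    intro j h; rw [hsucc j, h, show N-1+1 = N from by omega, ZMod.natCast_self]
  have hjzero : ∀ j : ZMod N, j.val = 0 → j = 0 := by
    intro j h; rw [← hjcast j, h, Nat.cast_zero]
  -- commutation of e_{N-1} and e 0
  have hc0N1 : e ((N-1 : ℕ) : ZMod (N+1)) * e 0 = e 0 * e ((N-1 : ℕ) : ZMod (N+1)) := by
    have h := hcommN (N-1) 0 (by omega) (by omega) (by omega) (by omega) (by omega)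
      (Or.inl (by omega)) (Or.inr (by omega))
    rwa [Nat.cast_zero] at h
  have hN1fN1 : e ((N-1 : ℕ) : ZMod (N+1)) * f * e ((N-1 : ℕ) : ZMod (N+1))
      = e ((N-1 : ℕ) : ZMod (N+1)) := by
    rw [hfd]; have h := hadjN (N-1); rwa [show N-1+1 = N from by omega] at h
  have hfN1f : f * e ((N-1 : ℕ) : ZMod (N+1)) * f = f := by
    rw [hfd]; have h := hadjN' (N-1); rwa [show N-1+1 = N from by omega] at h
  have he010 : e 0 * e ((1:ℕ) : ZMod (N+1)) * e 0 = e 0 := by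
    have h := hadjN 0; rwa [Nat.cast_zero, Nat.zero_add] at h
  have he101 : e ((1:ℕ) : ZMod (N+1)) * e 0 * e ((1:ℕ) : ZMod (N+1))
      = e ((1:ℕ) : ZMod (N+1)) := by
    have h := hadjN' 0; rwa [Nat.cast_zero, Nat.zero_add] at h
  have hc1f : e ((1:ℕ) : ZMod (N+1)) * f = f * e ((1:ℕ) : ZMod (N+1)) := by
    rw [hfd]
    exact hcommN 1 N (by omega) (by omega) (by omega) (by omega) (by omega)
      (Or.inl (by omega)) (Or.inr (by omega))
  constructor
  -- mul_uinv
  · rw [mul_assoc, ← mul_assoc gi g, hgig, one_mul, hrel.mul_uinv]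
  -- uinv_mul
  · rw [mul_assoc, ← mul_assoc uinv u, hrel.uinv_mul, one_mul]; exact hggi
  -- esq
  · intro j
    by_cases hj : j.val = 0
    · rw [if_pos hj, ATLaux.sandwich g gi _ _ hgig, hrel.esq 0, mul_smul_comm,
        smul_mul_assoc]
    · rw [if_neg hj]; exact hrel.esq _
  -- eje
  · intro j
    by_cases hj0 : j.val = 0
    · have hj1 : (j+1).val = 1 := by rw [hsuccval j (by have := hvlt j; omega), hj0]
      rw [if_pos hj0, hj1, if_neg one_ne_zero]
      have hgie : gi * e ((1:ℕ) : ZMod (N+1)) = e ((1:ℕ) : ZMod (N+1)) * gi := hcgi _ hc1f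
      rw [ATLaux.sandwich3 g gi (e 0) _ hgig hgie, he010]
    · by_cases hjN : j.val = N - 1
      · rw [if_neg hj0, hsucc0 j hjN, ZMod.val_zero, if_pos rfl, hjN, hG]
        exact ATLaux.key q q⁻¹ _ (e 0) f (hrel.esq _) hc0N1 hN1fN1 hfe0f
      · have ha1 : (j+1).val = j.val + 1 := hsuccval j (by have := hvlt j; omega)
        rw [if_neg hj0, ha1, if_neg (by omega)]
        exact hadjN j.val
  -- eje'
  · intro j
    by_cases hj0 : j.val = 0
    · have hj1 : (j+1).val = 1 := by rw [hsuccval j (by have := hvlt j; omega), hj0]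
      rw [if_pos hj0, hj1, if_neg one_ne_zero]
      exact ATLaux.sandwich4 g gi (e 0) _ hggi (hcg _ hc1f).symm (hcgi _ hc1f) he101
    · by_cases hjN : j.val = N - 1
      · rw [if_neg hj0, hsucc0 j hjN, ZMod.val_zero, if_pos rfl, hjN,
          ATLaux.sandwich5 g gi (e 0) _, hGi,
          ATLaux.key q⁻¹ q (e 0) _ f (by rw [add_comm q⁻¹ q]; exact hrel.esq 0)
            hc0N1.symm he0fe0 hfN1f]
      · have ha1 : (j+1).val = j.val + 1 := hsuccval j (by have := hvlt j; omega)
        rw [if_neg hj0, ha1, if_neg (by omega)]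
        exact hadjN' j.val
  -- ecomm
  · intro j l h1 h2 h3
    have hab : j.val ≠ l.val := fun h => h1 (by rw [← hjcast j, ← hjcast l, h])
    by_cases hj0 : j.val = 0 <;> by_cases hl0 : l.val = 0
    · exact absurd (hj0.trans hl0.symm) hab
    · -- j = 0, l ≠ 0
      have hjz : j = 0 := hjzero j hj0
      have hl1 : l.val ≠ 1 := by
        intro h
        exact h3 (by rw [← hjcast l, h, hjz, zero_add, Nat.cast_one])
      have hlN1 : l.val ≠ N - 1 := by
        intro h
        exact h2 (hjz.trans (hsucc0 l h).symm)
      rw [if_pos hj0, if_neg hl0]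
      have hzf : e ((l.val : ℕ) : ZMod (N+1)) * f = f * e ((l.val : ℕ) : ZMod (N+1)) := by
        rw [hfd]
        exact hcommN l.val N (by have := hvlt l; omega) (by omega) (by have := hvlt l; omega)
          (by have := hvlt l; omega) (by have := hvlt l; omega) (Or.inl (by omega)) (Or.inr (by have := hvlt l; omega))
      have hz0 : e 0 * e ((l.val : ℕ) : ZMod (N+1))
          = e ((l.val : ℕ) : ZMod (N+1)) * e 0 := by
        have h := hcommN 0 l.val (by omega) (by have := hvlt l; omega) (by have := hvlt l; omega)
          (by have := hvlt l; omega) (by have := hvlt l; omega) (Or.inr (by have := hvlt l; omega)) (Or.inl (by have := hvlt l; omega))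
        rwa [Nat.cast_zero] at h
      exact ATLaux.commG g gi (e 0) _ (hcg _ hzf) (hcgi _ hzf) hz0
    · -- l = 0, j ≠ 0
      have hlz : l = 0 := hjzero l hl0
      have hj1 : j.val ≠ 1 := by
        intro h
        exact h2 (by rw [← hjcast j, h, hlz, zero_add, Nat.cast_one])
      have hjN1 : j.val ≠ N - 1 := by
        intro h
        exact h3 (hlz.trans (hsucc0 j h).symm)
      rw [if_neg hj0, if_pos hl0]
      have hzf : e ((j.val : ℕ) : ZMod (N+1)) * f = f * e ((j.val : ℕ) : ZMod (N+1)) := by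
        rw [hfd]
        exact hcommN j.val N (by have := hvlt j; omega) (by omega) (by have := hvlt j; omega)
          (by have := hvlt j; omega) (by have := hvlt j; omega) (Or.inl (by omega)) (Or.inr (by have := hvlt j; omega))
      have hz0 : e 0 * e ((j.val : ℕ) : ZMod (N+1))
          = e ((j.val : ℕ) : ZMod (N+1)) * e 0 := by
        have h := hcommN 0 j.val (by omega) (by have := hvlt j; omega) (by have := hvlt j; omega)
          (by have := hvlt j; omega) (by have := hvlt j; omega) (Or.inr (by have := hvlt j; omega)) (Or.inl (by have := hvlt j; omega))
        rwa [Nat.cast_zero] at h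
      exact (ATLaux.commG g gi (e 0) _ (hcg _ hzf) (hcgi _ hzf) hz0).symm
    · -- both nonzero
      rw [if_neg hj0, if_neg hl0]
      have h2' : j.val ≠ l.val + 1 := by
        intro h
        have hlt : l.val + 1 < N := by have := hvlt j; omega
        exact h2 (by rw [← hjcast j, h, hsucc l])
      have h3' : l.val ≠ j.val + 1 := by
        intro h
        have hlt : j.val + 1 < N := by have := hvlt l; omega
        exact h3 (by rw [← hjcast l, h, hsucc j])
      exact hcommN j.val l.val (by have := hvlt j; omega) (by have := hvlt l; omega)
        hab h2' h3' (Or.inr (by have := hvlt l; omega)) (Or.inr (by have := hvlt j; omega))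
  -- uconj
  · intro j
    by_cases hj0 : j.val = 0
    · have hj1 : (j+1).val = 1 := by rw [hsuccval j (by have := hvlt j; omega), hj0]
      rw [if_pos hj0, hj1, if_neg one_ne_zero]
      calc (u*gi)*(g*e 0*gi)*(g*uinv) = u*((gi*g)*(e 0*((gi*g)*uinv))) := by
            simp only [mul_assoc]
        _ = u*(e 0*uinv) := by rw [hgig, one_mul, one_mul]
        _ = e ((1:ℕ) : ZMod (N+1)) := by
            rw [← mul_assoc]
            have h := huconjN 0
            rwa [Nat.cast_zero, Nat.zero_add] at h
    · by_cases hjN : j.val = N - 1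
      · rw [if_neg hj0, hsucc0 j hjN, ZMod.val_zero, if_pos rfl, hjN]
        have hstep : (u*gi)*e ((N-1:ℕ) : ZMod (N+1))*(g*uinv)
            = u*(gi*e ((N-1:ℕ) : ZMod (N+1))*g)*uinv := by simp only [mul_assoc]
        rw [hstep, hGi, ATLaux.conj_sum]
        have hu1 : u * e ((N-1:ℕ) : ZMod (N+1)) * uinv = f := by
          rw [hfd]; have h := huconjN (N-1); rwa [show N-1+1 = N from by omega] at h
        have hu2 : u * (e ((N-1:ℕ) : ZMod (N+1)) * f) * uinv = f * e 0 := by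
          rw [← ATLaux.sandwich u uinv _ _ hrel.uinv_mul, hu1, hufuinv]
        have hu3 : u * (f * e ((N-1:ℕ) : ZMod (N+1))) * uinv = e 0 * f := by
          rw [← ATLaux.sandwich u uinv _ _ hrel.uinv_mul, hu1, hufuinv]
        have hu4 : u * (f * e ((N-1:ℕ) : ZMod (N+1)) * f) * uinv = e 0 := by
          rw [hfN1f, hufuinv]
        rw [hu1, hu2, hu3, hu4, hG, hfe0f]
        module
      · have ha1 : (j+1).val = j.val + 1 := hsuccval j (by have := hvlt j; omega)
        rw [if_neg hj0, ha1, if_neg (by omega)]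
        have hzf : e ((j.val : ℕ) : ZMod (N+1)) * f = f * e ((j.val : ℕ) : ZMod (N+1)) := by
          rw [hfd]
          exact hcommN j.val N (by have := hvlt j; omega) (by omega) (by have := hvlt j; omega)
            (by have := hvlt j; omega) (by have := hvlt j; omega) (Or.inl (by omega)) (Or.inr (by have := hvlt j; omega))
        have hgie := hcgi _ hzf
        calc (u*gi)*e ((j.val : ℕ) : ZMod (N+1))*(g*uinv)
            = u*(gi*(e ((j.val : ℕ) : ZMod (N+1))*(g*uinv))) := by simp only [mul_assoc]
          _ = u*(e ((j.val : ℕ) : ZMod (N+1))*(gi*(g*uinv))) := by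
              rw [← mul_assoc gi, hgie, mul_assoc]
          _ = u*(e ((j.val : ℕ) : ZMod (N+1))*uinv) := by
              rw [← mul_assoc gi g, hgig, one_mul]
          _ = e ((j.val + 1 : ℕ) : ZMod (N+1)) := by rw [← mul_assoc]; exact huconjN j.val
  -- utwist
  · have hneg1N : (-1 : ZMod N) = ((N-1:ℕ) : ZMod N) := by
      have h : (((N-1) + 1 : ℕ) : ZMod N) = 0 := by
        rw [show (N-1)+1 = N from by omega]; exact ZMod.natCast_self N
      push_cast at h
      exact neg_eq_of_add_eq_zero_left h
    have hval : (-1 : ZMod N).val = N-1 := by rw [hneg1N, hvcast _ (by omega)]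
    rw [hval, if_neg (by omega)]
    have hmap : (List.range (N-1)).map (fun t =>
          if ((t+1:ℕ) : ZMod N).val = 0 then g * e 0 * gi
          else e (((((t+1:ℕ) : ZMod N)).val : ℕ) : ZMod (N + 1)))
        = (List.range (N-1)).map (fun t => e ((t+1:ℕ) : ZMod (N+1))) := by
      apply List.map_congr_left
      intro t ht
      have htlt : t < N-1 := List.mem_range.mp ht
      have hv : ((t+1:ℕ) : ZMod N).val = t+1 := hvcast _ (by omega)
      rw [hv, if_neg (by omega)]
    rw [hmap]
    set Q := ((List.range (N-1)).map (fun t => e ((t+1:ℕ) : ZMod (N+1)))).prod with hQ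
    have hneg1N1 : (-1 : ZMod (N+1)) = ((N:ℕ) : ZMod (N+1)) := by
      have h : ((N + 1 : ℕ) : ZMod (N+1)) = 0 := ZMod.natCast_self _
      push_cast at h
      exact neg_eq_of_add_eq_zero_left h
    have hsplitN : ((List.range N).map (fun t => e ((t+1:ℕ) : ZMod (N+1)))).prod
        = Q * f := by
      have hr : List.range N = List.range (N-1) ++ [N-1] := by
        conv_lhs => rw [show N = (N-1)+1 from by omega]
        rw [List.range_succ]
      rw [hr, List.map_append, List.prod_append, List.map_singleton, List.prod_singleton,
        show (N-1)+1 = N from by omega, ← hQ, ← hfd]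
    have hP : u * u * f = Q * f := by
      have ht := hrel.utwist
      rw [hneg1N1, Nat.add_sub_cancel, hsplitN, ← hfd] at ht
      exact ht
    have hQe : Q * f * e ((N-1:ℕ) : ZMod (N+1)) = Q := by
      have hr2 : List.range (N-1) = List.range (N-2) ++ [N-2] := by
        conv_lhs => rw [show N-1 = (N-2)+1 from by omega]
        rw [List.range_succ]
      have hQ' : Q = ((List.range (N-2)).map (fun t => e ((t+1:ℕ) : ZMod (N+1)))).prod
          * e ((N-1:ℕ) : ZMod (N+1)) := by
        rw [hQ, hr2, List.map_append, List.prod_append, List.map_singleton,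
          List.prod_singleton, show (N-2)+1 = N-1 from by omega]
      rw [hQ']
      rw [mul_assoc, mul_assoc, ← mul_assoc (e ((N-1:ℕ) : ZMod (N+1))) f, hN1fN1]
    have hufu2 : u * e ((N-1:ℕ) : ZMod (N+1)) = f * u := by
      rw [hfd]; have h := hshiftN (N-1); rwa [show N-1+1 = N from by omega] at h
    have k1 : u * u * e ((N-1:ℕ) : ZMod (N+1)) = e 0 * (u*u) := by
      rw [mul_assoc, hufu2, ← mul_assoc, hufu, mul_assoc]
    have hC : u * u * e ((N-1:ℕ) : ZMod (N+1)) = e 0 * Q := by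
      calc u * u * e ((N-1:ℕ) : ZMod (N+1))
          = u * u * (e ((N-1:ℕ) : ZMod (N+1)) * f * e ((N-1:ℕ) : ZMod (N+1))) := by
            rw [hN1fN1]
        _ = (u * u * e ((N-1:ℕ) : ZMod (N+1))) * (f * e ((N-1:ℕ) : ZMod (N+1))) := by
            simp only [mul_assoc]
        _ = (e 0 * (u*u)) * (f * e ((N-1:ℕ) : ZMod (N+1))) := by rw [k1]
        _ = e 0 * ((u * u * f) * e ((N-1:ℕ) : ZMod (N+1))) := by simp only [mul_assoc]
        _ = e 0 * (Q * f * e ((N-1:ℕ) : ZMod (N+1))) := by rw [hP]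
        _ = e 0 * Q := by rw [hQe]
    have hgi0 : u * gi = ((-Complex.I) • (sq⁻¹ • (1:A) - sq • e 0)) * u := by
      rw [hgid]
      simp only [mul_smul_comm, smul_mul_assoc, mul_sub, sub_mul, mul_one, one_mul, hufu]
    have hsw : (u*gi)*(u*gi)*e ((N-1:ℕ) : ZMod (N+1))
        = ((-Complex.I) • (sq⁻¹ • (1:A) - sq • e 0)) * ((u*u) * (gi*e ((N-1:ℕ) : ZMod (N+1)))) := by
      nth_rewrite 1 [hgi0]
      simp only [mul_assoc]
    rw [hsw]
    have hinner : (u*u) * (gi*e ((N-1:ℕ) : ZMod (N+1)))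
        = (-Complex.I) • (sq⁻¹ • (e 0 * Q) - sq • Q) := by
      rw [hgid]
      simp only [smul_mul_assoc, sub_mul, smul_sub, mul_sub, one_mul, mul_smul_comm, smul_smul]
      rw [hC, ← mul_assoc (u*u) f, hP, hQe]
    rw [hinner]
    have he00 : e 0 * e 0 = (sq*sq + (sq*sq)⁻¹) • e 0 := by rw [hsq]; exact hrel.esq 0
    exact ATLaux.final sq hs0 (e 0) Q he00

end ATLaux

/-- One-step embedding `aTL_N(m) → aTL_{N+1}(m)` with `m = q + q⁻¹`:  inside
`aTL_{N+1}(m)` (given by `u`, `uinv`, `e`), the assignment `u ↦ u g_N⁻¹`,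
`e_i ↦ e_i` for `1 ≤ i ≤ N−1`, and `e_0 ↦ g_N e_0 g_N⁻¹` defines an algebra
homomorphism from `aTL_N(m)`: the images satisfy all the defining relations of
`aTL_N(m)`, including `(u g_N⁻¹)² e_{N−1} = e_1 ⋯ e_{N−1}`.  Here
`g_N = i(q^{1/2}·1 − q^{-1/2} e_N)` with inverse `g_N⁻¹ = −i(q^{-1/2}·1 − q^{1/2} e_N)`. -/
theorem atl_one_step_embedding (A : Type*) [Ring A] [Algebra ℂ A]
    (N : ℕ) (hN : 3 ≤ N)
    (q sq : ℂ) (hq : q ≠ 0) (hq2 : q ^ 2 ≠ -1) (hsq : sq * sq = q)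
    (u uinv : A) (e : ZMod (N + 1) → A)
    (hrel : AffineTLRel A (N + 1) (q + q⁻¹) u uinv e) :
    let gN : A := Complex.I • (sq • (1 : A) - sq⁻¹ • e ((N : ℕ) : ZMod (N + 1)))
    let gNinv : A := (-Complex.I) • (sq⁻¹ • (1 : A) - sq • e ((N : ℕ) : ZMod (N + 1)))
    let U : A := u * gNinv
    let Uinv : A := gN * uinv
    let E : ZMod N → A := fun i =>
      if i.val = 0 then gN * e 0 * gNinv else e ((i.val : ℕ) : ZMod (N + 1))
    AffineTLRel A N (q + q⁻¹) U Uinv E := by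
  intro gN gNinv U Uinv E
  exact ATLaux.main N hN q sq hq hsq u uinv e hrel _ _ _ rfl rfl rfl
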